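/- arXiv:1905.08005 — 3 statements merged into one kernel-verified Lean document; each statement's English description precedes it below -/
import Mathlib

section
/- For all real x ∈ (0,3) with x not an integer, (2/3)(1/x + 1/(3-x)) ≤ ∑_{k ∈ ℤ, k ∉ {1,2}} 1/(x-k)². -/
open Real

theorem key_inequality_localizing (x : ℝ) (hx : x ∈ Set.Ioo (0 : ℝ) 3)
    (hxi : ∀ k : ℤ, x ≠ (k : ℝ)) :
    (2 / 3) * (1 / x + 1 / (3 - x)) ≤
      ∑' k : {k : ℤ // k ≠ 1 ∧ k ≠ 2}, 1 / (x - ((k : ℤ) : ℝ)) ^ 2 := by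
  obtain ⟨hx0, hx3⟩ := hx
  have hx3' : (0:ℝ) < 3 - x := by linarith
  have hs : Summable (fun k : ℤ => 1 / (x - (k:ℝ))^2) := by
    have h := (Real.summable_one_div_int_add_rpow (-x) 2).2 one_lt_two
    refine h.congr fun n => ?_
    rw [show ((n:ℝ) + -x) = -(x - n) by ring, abs_neg,
      show (2:ℝ) = ((2:ℕ):ℝ) by norm_num, Real.rpow_natCast, sq_abs]
  have hs' : Summable (fun k : {k : ℤ // k ≠ 1 ∧ k ≠ 2} => 1 / (x - ((k:ℤ):ℝ))^2) :=
    hs.subtype _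
  set k0 : {k : ℤ // k ≠ 1 ∧ k ≠ 2} := ⟨0, by decide⟩
  set k3 : {k : ℤ // k ≠ 1 ∧ k ≠ 2} := ⟨3, by decide⟩
  have hsum : ∑ k ∈ ({k0, k3} : Finset _), 1 / (x - ((k:ℤ):ℝ))^2 ≤
      ∑' k : {k : ℤ // k ≠ 1 ∧ k ≠ 2}, 1 / (x - ((k:ℤ):ℝ))^2 := by
    refine Summable.sum_le_tsum _ (fun k _ => by positivity) hs'
  have hne : k0 ≠ k3 := by decide
  rw [Finset.sum_pair hne] at hsum
  refine le_trans ?_ hsum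
  have e0 : ((k0:ℤ):ℝ) = 0 := by norm_num [k0]
  have e3 : ((k3:ℤ):ℝ) = 3 := by norm_num [k3]
  rw [e0, e3]
  rw [sub_zero]
  have h1 : x ≠ 0 := ne_of_gt hx0
  have h2 : (3 - x) ≠ 0 := ne_of_gt hx3'
  have h3 : x - 3 ≠ 0 := by intro h; apply h2; linarith
  have key : 1 / x^2 + 1 / (x - 3)^2 - (2/3) * (1/x + 1/(3-x)) =
      (2*x - 3)^2 / (x^2 * (3 - x)^2) := by
    field_simp
    ring
  have hpos : 0 ≤ (2*x - 3)^2 / (x^2 * (3 - x)^2) :=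
    div_nonneg (sq_nonneg _) (by positivity)
  linarith
end

section
/- For all real x, the function φ(x) = (sin²(πx)/π²)·((2/3)(1/x − 1/(x−3)) + 1/(x−1)² + 1/(x−2)²) (extended continuously at x ∈ {0,1,2,3}) satisfies φ(x) ≤ 1 whenever x ∈ [0,3], and φ(x) ≤ 0 whenever x ≤ 0 or x ≥ 3. -/
open Real

private lemma aux_nonneg {f f' : ℝ → ℝ} (hf : ∀ y, HasDerivAt f (f' y) y)
    (h0 : f 0 = 0) (hd : ∀ y, 0 ≤ y → 0 ≤ f' y) {x : ℝ} (hx : 0 ≤ x) : 0 ≤ f x := by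
  rw [← h0]
  have hmono : MonotoneOn f (Set.Ici (0:ℝ)) := by
    apply monotoneOn_of_deriv_nonneg (convex_Ici 0)
    · exact fun y _ => (hf y).continuousAt.continuousWithinAt
    · exact fun y _ => (hf y).differentiableAt.differentiableWithinAt
    · intro y hy
      rw [interior_Ici] at hy
      rw [(hf y).deriv]
      exact hd y hy.le
  exact hmono Set.self_mem_Ici hx hx

private lemma sin_lb1 {x : ℝ} (hx : 0 ≤ x) : x - x^3/6 ≤ Real.sin x := by
  have h := aux_nonneg (f := fun y => Real.sin y - y + y^3/6)
    (f' := fun y => Real.cos y - 1 + y^2/2)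
    (fun y => by
      have := ((Real.hasDerivAt_sin y).sub (hasDerivAt_id y)).add
        ((hasDerivAt_pow 3 y).div_const 6)
      exact this.congr_deriv (by push_cast; ring))
    (by norm_num)
    (fun y _ => by nlinarith [Real.one_sub_sq_div_two_le_cos (x := y)])
    hx
  linarith

private lemma cos_ub1 (x : ℝ) : Real.cos x ≤ 1 - x^2/2 + x^4/24 := by
  have key : ∀ y : ℝ, 0 ≤ y → Real.cos y ≤ 1 - y^2/2 + y^4/24 := by
    intro y hy
    have h := aux_nonneg (f := fun z => 1 - z^2/2 + z^4/24 - Real.cos z)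
      (f' := fun z => -z + z^3/6 + Real.sin z)
      (fun z => by
        have := (((hasDerivAt_const z (1:ℝ)).sub ((hasDerivAt_pow 2 z).div_const 2)).add
          ((hasDerivAt_pow 4 z).div_const 24)).sub (Real.hasDerivAt_cos z)
        exact this.congr_deriv (by push_cast; ring))
      (by norm_num)
      (fun z hz => by nlinarith [sin_lb1 hz])
      hy
    linarith
  rcases le_total 0 x with h | h
  · exact key x h
  · have := key (-x) (by linarith)
    rw [Real.cos_neg] at this
    nlinarith [this]

private lemma sin_ub1 {x : ℝ} (hx : 0 ≤ x) : Real.sin x ≤ x - x^3/6 + x^5/120 := by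
  have h := aux_nonneg (f := fun y => y - y^3/6 + y^5/120 - Real.sin y)
    (f' := fun y => 1 - y^2/2 + y^4/24 - Real.cos y)
    (fun y => by
      have := (((hasDerivAt_id y).sub ((hasDerivAt_pow 3 y).div_const 6)).add
        ((hasDerivAt_pow 5 y).div_const 120)).sub (Real.hasDerivAt_sin y)
      exact this.congr_deriv (by push_cast; ring))
    (by norm_num)
    (fun y _ => by nlinarith [cos_ub1 y])
    hx
  linarith

private lemma cos_lb1 (x : ℝ) : 1 - x^2/2 + x^4/24 - x^6/720 ≤ Real.cos x := by
  have key : ∀ y : ℝ, 0 ≤ y → 1 - y^2/2 + y^4/24 - y^6/720 ≤ Real.cos y := by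
    intro y hy
    have h := aux_nonneg (f := fun z => Real.cos z - (1 - z^2/2 + z^4/24 - z^6/720))
      (f' := fun z => -Real.sin z + z - z^3/6 + z^5/120)
      (fun z => by
        have := (Real.hasDerivAt_cos z).sub
          ((((hasDerivAt_const z (1:ℝ)).sub ((hasDerivAt_pow 2 z).div_const 2)).add
            ((hasDerivAt_pow 4 z).div_const 24)).sub ((hasDerivAt_pow 6 z).div_const 720))
        exact this.congr_deriv (by push_cast; ring))
      (by norm_num)
      (fun z hz => by nlinarith [sin_ub1 hz])
      hy
    linarith
  rcases le_total 0 x with h | h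
  · exact key x h
  · have := key (-x) (by linarith)
    rw [Real.cos_neg] at this
    nlinarith [this]

private lemma sin_sq_ub (t : ℝ) : Real.sin t ^ 2 ≤ t^2 - t^4/3 + 2/45*t^6 := by
  have h1 := Real.cos_two_mul t
  have h2 := Real.sin_sq t
  have h3 := cos_lb1 (2*t)
  nlinarith [h3]

private lemma bern0 (x : ℝ) (h1 : 0 ≤ x) (h2 : x ≤ 1/2) :
    (x^2 - (12337/1250)*x^4/3 + (24353/5625)*x^6) *
      (2*(x-1)^2*(x-2)^2 + x*(3-x)*((x-2)^2+(x-1)^2)) ≤ x*(3-x)*(x-1)^2*(x-2)^2 := by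
  have hA : (0:ℝ) ≤ x := h1
  have hB : (0:ℝ) ≤ 1/2 - x := by linarith
  linarith [mul_nonneg (pow_nonneg hA 0) (pow_nonneg hB 10),
    mul_nonneg (pow_nonneg hA 1) (pow_nonneg hB 9),
    mul_nonneg (pow_nonneg hA 2) (pow_nonneg hB 8),
    mul_nonneg (pow_nonneg hA 3) (pow_nonneg hB 7),
    mul_nonneg (pow_nonneg hA 4) (pow_nonneg hB 6),
    mul_nonneg (pow_nonneg hA 5) (pow_nonneg hB 5),
    mul_nonneg (pow_nonneg hA 6) (pow_nonneg hB 4),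
    mul_nonneg (pow_nonneg hA 7) (pow_nonneg hB 3),
    mul_nonneg (pow_nonneg hA 8) (pow_nonneg hB 2),
    mul_nonneg (pow_nonneg hA 9) (pow_nonneg hB 1),
    mul_nonneg (pow_nonneg hA 10) (pow_nonneg hB 0)]

private lemma bern1l (x : ℝ) (h1 : 1/2 ≤ x) (h2 : x ≤ 1) :
    ((x-1)^2 - (12337/1250)*(x-1)^4/3 + (24353/5625)*(x-1)^6) *
      (2*(x-1)^2*(x-2)^2 + x*(3-x)*((x-2)^2+(x-1)^2)) ≤ x*(3-x)*(x-1)^2*(x-2)^2 := by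
  have hA : (0:ℝ) ≤ x - 1/2 := by linarith
  have hB : (0:ℝ) ≤ 1 - x := by linarith
  linarith [mul_nonneg (pow_nonneg hA 0) (pow_nonneg hB 10),
    mul_nonneg (pow_nonneg hA 1) (pow_nonneg hB 9),
    mul_nonneg (pow_nonneg hA 2) (pow_nonneg hB 8),
    mul_nonneg (pow_nonneg hA 3) (pow_nonneg hB 7),
    mul_nonneg (pow_nonneg hA 4) (pow_nonneg hB 6),
    mul_nonneg (pow_nonneg hA 5) (pow_nonneg hB 5),
    mul_nonneg (pow_nonneg hA 6) (pow_nonneg hB 4),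
    mul_nonneg (pow_nonneg hA 7) (pow_nonneg hB 3),
    mul_nonneg (pow_nonneg hA 8) (pow_nonneg hB 2),
    mul_nonneg (pow_nonneg hA 9) (pow_nonneg hB 1),
    mul_nonneg (pow_nonneg hA 10) (pow_nonneg hB 0)]

private lemma bern1r (x : ℝ) (h1 : 1 ≤ x) (h2 : x ≤ 3/2) :
    ((x-1)^2 - (12337/1250)*(x-1)^4/3 + (24353/5625)*(x-1)^6) *
      (2*(x-1)^2*(x-2)^2 + x*(3-x)*((x-2)^2+(x-1)^2)) ≤ x*(3-x)*(x-1)^2*(x-2)^2 := by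
  have hA : (0:ℝ) ≤ x - 1 := by linarith
  have hB : (0:ℝ) ≤ 3/2 - x := by linarith
  linarith [mul_nonneg (pow_nonneg hA 0) (pow_nonneg hB 10),
    mul_nonneg (pow_nonneg hA 1) (pow_nonneg hB 9),
    mul_nonneg (pow_nonneg hA 2) (pow_nonneg hB 8),
    mul_nonneg (pow_nonneg hA 3) (pow_nonneg hB 7),
    mul_nonneg (pow_nonneg hA 4) (pow_nonneg hB 6),
    mul_nonneg (pow_nonneg hA 5) (pow_nonneg hB 5),
    mul_nonneg (pow_nonneg hA 6) (pow_nonneg hB 4),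
    mul_nonneg (pow_nonneg hA 7) (pow_nonneg hB 3),
    mul_nonneg (pow_nonneg hA 8) (pow_nonneg hB 2),
    mul_nonneg (pow_nonneg hA 9) (pow_nonneg hB 1),
    mul_nonneg (pow_nonneg hA 10) (pow_nonneg hB 0)]

private lemma pi_sq_lb : (12337/1250 : ℝ) ≤ π^2 := by
  nlinarith [Real.pi_gt_d6]

private lemma pi_sq_ub : π^2 ≤ (98697/10000 : ℝ) := by
  nlinarith [Real.pi_lt_d6, Real.pi_pos]

private lemma pi_pow4_ub : π^4 ≤ (24353/250 : ℝ) := by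
  have h := pi_sq_ub
  nlinarith [sq_nonneg π, h, mul_self_nonneg ((98697/10000:ℝ) - π^2)]

private lemma sin_sq_le_poly (u : ℝ) :
    Real.sin (π*u) ^ 2 ≤ π^2 * (u^2 - (12337/1250)*u^4/3 + (24353/5625)*u^6) := by
  have hs := sin_sq_ub (π*u)
  have h1 : 0 ≤ (π^2 - 12337/1250) * (π^2 * u^4) :=
    mul_nonneg (by linarith [pi_sq_lb]) (by positivity)
  have h2 : 0 ≤ (24353/250 - π^4) * (π^2 * u^6) :=
    mul_nonneg (by linarith [pi_pow4_ub]) (by positivity)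
  nlinarith [hs, h1, h2]

private lemma key_half (x : ℝ) (h0 : 0 ≤ x) (h3 : x ≤ 3/2) :
    Real.sin (π*x)^2 * (2*(x-1)^2*(x-2)^2 + x*(3-x)*((x-2)^2+(x-1)^2)) ≤
      π^2 * (x*(3-x)*(x-1)^2*(x-2)^2) := by
  have hN : 0 ≤ 2*(x-1)^2*(x-2)^2 + x*(3-x)*((x-2)^2+(x-1)^2) :=
    add_nonneg (by positivity)
      (mul_nonneg (mul_nonneg h0 (by linarith)) (by positivity))
  have hπ : (0:ℝ) ≤ π^2 := sq_nonneg π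
  rcases le_total x (1/2) with hc | hc
  · calc Real.sin (π*x)^2 * (2*(x-1)^2*(x-2)^2 + x*(3-x)*((x-2)^2+(x-1)^2))
        ≤ (π^2 * (x^2 - (12337/1250)*x^4/3 + (24353/5625)*x^6)) *
            (2*(x-1)^2*(x-2)^2 + x*(3-x)*((x-2)^2+(x-1)^2)) :=
          mul_le_mul_of_nonneg_right (sin_sq_le_poly x) hN
      _ = π^2 * ((x^2 - (12337/1250)*x^4/3 + (24353/5625)*x^6) *
            (2*(x-1)^2*(x-2)^2 + x*(3-x)*((x-2)^2+(x-1)^2))) := by ring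
      _ ≤ π^2 * (x*(3-x)*(x-1)^2*(x-2)^2) :=
          mul_le_mul_of_nonneg_left (bern0 x h0 hc) hπ
  · have hshift : Real.sin (π*x)^2 = Real.sin (π*(x-1))^2 := by
      rw [show π*x = π*(x-1) + π by ring, Real.sin_add_pi]; ring
    rw [hshift]
    have hmain : ((x-1)^2 - (12337/1250)*(x-1)^4/3 + (24353/5625)*(x-1)^6) *
        (2*(x-1)^2*(x-2)^2 + x*(3-x)*((x-2)^2+(x-1)^2)) ≤ x*(3-x)*(x-1)^2*(x-2)^2 := by
      rcases le_total x 1 with hc1 | hc1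
      · exact bern1l x hc hc1
      · exact bern1r x hc1 h3
    calc Real.sin (π*(x-1))^2 * (2*(x-1)^2*(x-2)^2 + x*(3-x)*((x-2)^2+(x-1)^2))
        ≤ (π^2 * ((x-1)^2 - (12337/1250)*(x-1)^4/3 + (24353/5625)*(x-1)^6)) *
            (2*(x-1)^2*(x-2)^2 + x*(3-x)*((x-2)^2+(x-1)^2)) :=
          mul_le_mul_of_nonneg_right (sin_sq_le_poly (x-1)) hN
      _ = π^2 * (((x-1)^2 - (12337/1250)*(x-1)^4/3 + (24353/5625)*(x-1)^6) *
            (2*(x-1)^2*(x-2)^2 + x*(3-x)*((x-2)^2+(x-1)^2))) := by ring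
      _ ≤ π^2 * (x*(3-x)*(x-1)^2*(x-2)^2) := mul_le_mul_of_nonneg_left hmain hπ

private lemma key (x : ℝ) (h0 : 0 ≤ x) (h3 : x ≤ 3) :
    Real.sin (π*x)^2 * (2*(x-1)^2*(x-2)^2 + x*(3-x)*((x-2)^2+(x-1)^2)) ≤
      π^2 * (x*(3-x)*(x-1)^2*(x-2)^2) := by
  rcases le_total x (3/2) with hc | hc
  · exact key_half x h0 hc
  · have h1 := key_half (3-x) (by linarith) (by linarith)
    have h2 : Real.sin (π*(3-x)) = Real.sin (π*x) := by
      rw [show π*(3-x) = -(π*x) + (3:ℕ)*π by push_cast; ring,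
        Real.sin_add_nat_mul_pi, Real.sin_neg]
      norm_num
    rw [h2] at h1
    nlinarith [h1]

/-- The localizing function `φ`, with the continuous extension at the
integer points `x ∈ {0,1,2,3}` (the formula itself extends continuously by `0`
at `x = 0, 3` under Lean's junk-value conventions, and by `1` at `x = 1, 2`). -/
noncomputable def phi (x : ℝ) : ℝ :=
  if x = 1 ∨ x = 2 then 1
  else (Real.sin (π * x)) ^ 2 / π ^ 2 *
    ((2 / 3) * (1 / x - 1 / (x - 3)) + 1 / (x - 1) ^ 2 + 1 / (x - 2) ^ 2)

theorem phi_minorant (x : ℝ) :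
    (x ∈ Set.Icc (0 : ℝ) 3 → phi x ≤ 1) ∧ ((x ≤ 0 ∨ 3 ≤ x) → phi x ≤ 0) := by
  constructor
  · rintro ⟨hx0, hx3⟩
    by_cases h12 : x = 1 ∨ x = 2
    · simp [phi, h12]
    · rw [phi, if_neg h12]
      push_neg at h12
      obtain ⟨hx1, hx2⟩ := h12
      by_cases hz : x = 0
      · subst hz; simp
      · by_cases h3 : x = 3
        · subst h3
          have hs : Real.sin (π*3) = 0 := by
            rw [show π*3 = 0 + (3:ℕ)*π by push_cast; ring, Real.sin_add_nat_mul_pi]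
            simp
          rw [hs]; norm_num
        · have h0 : 0 < x := lt_of_le_of_ne hx0 (Ne.symm hz)
          have h3' : x < 3 := lt_of_le_of_ne hx3 h3
          have hd1 : x - 1 ≠ 0 := sub_ne_zero.mpr hx1
          have hd2 : x - 2 ≠ 0 := sub_ne_zero.mpr hx2
          have hd3 : x - 3 ≠ 0 := sub_ne_zero.mpr h3
          have hP : 0 < x*(3-x)*(x-1)^2*(x-2)^2 := by
            have e1 : (0:ℝ) < (x-1)^2 := (sq_nonneg _).lt_of_ne (Ne.symm (pow_ne_zero _ hd1))
            have e2 : (0:ℝ) < (x-2)^2 := (sq_nonneg _).lt_of_ne (Ne.symm (pow_ne_zero _ hd2))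
            have e3 : (0:ℝ) < 3 - x := by linarith
            positivity
          have heq : (2/3)*(1/x - 1/(x-3)) + 1/(x-1)^2 + 1/(x-2)^2 =
              (2*(x-1)^2*(x-2)^2 + x*(3-x)*((x-2)^2+(x-1)^2)) /
                (x*(3-x)*(x-1)^2*(x-2)^2) := by
            rw [eq_div_iff hP.ne']
            field_simp
            ring
          rw [heq, div_mul_div_comm,
            div_le_one (by positivity : (0:ℝ) < π^2 * (x*(3-x)*(x-1)^2*(x-2)^2))]
          exact key x hx0 hx3
  · intro h
    have h12 : ¬(x = 1 ∨ x = 2) := by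
      rintro (rfl | rfl) <;> rcases h with h | h <;> norm_num at h
    rw [phi, if_neg h12]
    by_cases hz : x = 0
    · subst hz; simp
    · by_cases h3 : x = 3
      · subst h3
        have hs : Real.sin (π*3) = 0 := by
          rw [show π*3 = 0 + (3:ℕ)*π by push_cast; ring, Real.sin_add_nat_mul_pi]
          simp
        rw [hs]; norm_num
      · push_neg at h12
        obtain ⟨hx1, hx2⟩ := h12
        have hd0 : x ≠ 0 := hz
        have hd1 : x - 1 ≠ 0 := sub_ne_zero.mpr hx1
        have hd2 : x - 2 ≠ 0 := sub_ne_zero.mpr hx2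
        have hd3 : x - 3 ≠ 0 := sub_ne_zero.mpr h3
        have hD : 0 < x*(x-3)*(x-1)^2*(x-2)^2 := by
          have e1 : (0:ℝ) < (x-1)^2 := (sq_nonneg _).lt_of_ne (Ne.symm (pow_ne_zero _ hd1))
          have e2 : (0:ℝ) < (x-2)^2 := (sq_nonneg _).lt_of_ne (Ne.symm (pow_ne_zero _ hd2))
          have e0 : 0 < x*(x-3) := by
            rcases h with h | h
            · have hx : x < 0 := lt_of_le_of_ne h hz
              exact mul_pos_of_neg_of_neg hx (by linarith)
            · have hx : 3 < x := lt_of_le_of_ne h (Ne.symm h3)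
              exact mul_pos (by linarith) (by linarith)
          calc (0:ℝ) < (x*(x-3)) * ((x-1)^2*(x-2)^2) := mul_pos e0 (mul_pos e1 e2)
            _ = x*(x-3)*(x-1)^2*(x-2)^2 := by ring
        have heq : (2/3)*(1/x - 1/(x-3)) + 1/(x-1)^2 + 1/(x-2)^2 =
            (-3*x^2 + 9*x - 8) / (x*(x-3)*(x-1)^2*(x-2)^2) := by
          rw [eq_div_iff hD.ne']
          field_simp
          ring
        rw [heq]
        apply mul_nonpos_of_nonneg_of_nonpos (by positivity)
        apply div_nonpos_of_nonpos_of_nonneg _ hD.le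
        nlinarith [sq_nonneg (2*x - 3)]
end

section
/- For x ≤ 0 (with continuous extension at integers), φ(x) = (sin²(πx)/π²)·((2/3)(1/x − 1/(x−3)) + 1/(x−1)² + 1/(x−2)²) satisfies φ(x) ≤ 0. -/
open Real

theorem phi_nonpos_of_nonpos (x : ℝ) (hx : x ≤ 0) : phi x ≤ 0 := by
  rcases eq_or_lt_of_le hx with h0 | h0
  · subst h0
    simp [phi]
  · have hne : ¬ (x = 1 ∨ x = 2) := by
      rintro (rfl | rfl) <;> linarith
    rw [phi, if_neg hne]
    have hx0 : x ≠ 0 := ne_of_lt h0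
    have hx3 : x - 3 ≠ 0 := by intro h; linarith
    have hx1 : x - 1 ≠ 0 := by intro h; linarith
    have hx2 : x - 2 ≠ 0 := by intro h; linarith
    have key : (2 / 3) * (1 / x - 1 / (x - 3)) + 1 / (x - 1) ^ 2 + 1 / (x - 2) ^ 2
        = -(3 * x ^ 2 - 9 * x + 8) / (x * (x - 3) * (x - 1) ^ 2 * (x - 2) ^ 2) := by
      field_simp
      ring
    have hden : 0 < x * (x - 3) * (x - 1) ^ 2 * (x - 2) ^ 2 := by
      have h1 : 0 < x * (x - 3) := mul_pos_of_neg_of_neg h0 (by linarith)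
      positivity
    have hnum : -(3 * x ^ 2 - 9 * x + 8) ≤ 0 := by nlinarith [sq_nonneg x]
    have hE : (2 / 3) * (1 / x - 1 / (x - 3)) + 1 / (x - 1) ^ 2 + 1 / (x - 2) ^ 2 ≤ 0 := by
      rw [key]
      exact div_nonpos_of_nonpos_of_nonneg hnum hden.le
    have hsq : 0 ≤ (Real.sin (π * x)) ^ 2 / π ^ 2 := by positivity
    exact mul_nonpos_of_nonneg_of_nonpos hsq hE
end
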